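/- arXiv:1201.0365 — 3 statements merged into one kernel-verified Lean document; each statement's English description precedes it below -/
import Mathlib

section
/- For every permutation π of {1,2,…,n}, the inequality 2·c(π) ≤ n − 1 + c(overline(π)) holds, where c(π) is the number of cycles (including fixed points) of π as a permutation of {1,…,n}, and c(overline(π)) is the number of cycles (including fixed points) of the permutation overline(π) of {0,1,…,n}. -/
/-- The (n+1)-cycle (0,1,2,…,n) on {0,1,…,n} = `Fin (n+1)`, mapping x to x+1 (mod n+1). -/
def rho (n : ℕ) : Equiv.Perm (Fin (n + 1)) :=
  finRotate (n + 1)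

/-- For a permutation `π` of {0,1,…,n} fixing 0 (the extension of a permutation of {1,…,n}),
`ob n π` is `overline(π) = ρ ∘ β_π`, where `β_π = π ∘ ρ⁻¹ ∘ π⁻¹` is precisely the
(n+1)-cycle (0, π_n, π_{n−1}, …, π_1): it sends 0 ↦ π_n, π_i ↦ π_{i−1} (2 ≤ i ≤ n),
and π_1 ↦ 0. -/
def ob (n : ℕ) (π : Equiv.Perm (Fin (n + 1))) : Equiv.Perm (Fin (n + 1)) :=
  rho n * (π * (rho n)⁻¹ * π⁻¹)

/-- The number of fixed points c₁(σ) of a permutation σ. -/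
def fixedPointCount {m : ℕ} (σ : Equiv.Perm (Fin m)) : ℕ :=
  (Finset.univ.filter fun x => σ x = x).card

/-- The number of cycles c(σ) of a permutation σ, counting fixed points as 1-cycles
(`Equiv.Perm.cycleType` lists the lengths of the cycles of length ≥ 2). -/
def cycleCount {m : ℕ} (σ : Equiv.Perm (Fin m)) : ℕ :=
  σ.cycleType.card + fixedPointCount σ

/-- The number of odd-length cycles c_odd(σ) of a permutation σ, counting fixed points
as (odd) 1-cycles. -/
def oddCycleCount {m : ℕ} (σ : Equiv.Perm (Fin m)) : ℕ :=
  (σ.cycleType.filter fun k => Odd k).card + fixedPointCount σ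

/-- The number of fixed points of σ among the elements {1,…,n}, i.e. c₁(σ) for σ viewed
as a permutation of {1,…,n} (σ is a permutation of {0,1,…,n} fixing 0). -/
def fixedPointCountPos (n : ℕ) (σ : Equiv.Perm (Fin (n + 1))) : ℕ :=
  (Finset.univ.filter fun x : Fin (n + 1) => x ≠ 0 ∧ σ x = x).card

/-- The number of cycles c(σ) of σ viewed as a permutation of {1,…,n}, counting fixed
points as 1-cycles. -/
def cycleCountPos (n : ℕ) (σ : Equiv.Perm (Fin (n + 1))) : ℕ :=
  σ.cycleType.card + fixedPointCountPos n σ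

/-- The number of odd-length cycles c_odd(σ) of σ viewed as a permutation of {1,…,n},
counting fixed points as (odd) 1-cycles. -/
def oddCycleCountPos (n : ℕ) (σ : Equiv.Perm (Fin (n + 1))) : ℕ :=
  (σ.cycleType.filter fun k => Odd k).card + fixedPointCountPos n σ



section TwoCAux

open Equiv Equiv.Perm

variable {m : ℕ}

/-- The submodule of functions `Fin m → ℚ` invariant under σ. -/
private def fixS (σ : Equiv.Perm (Fin m)) : Submodule ℚ (Fin m → ℚ) where
  carrier := {f | ∀ x, f (σ x) = f x}
  add_mem' := fun hf hg x => by simp [Pi.add_apply, hf x, hg x]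
  zero_mem' := fun x => rfl
  smul_mem' := fun c f hf x => by simp [Pi.smul_apply, hf x]

private lemma fix_zpow {σ : Equiv.Perm (Fin m)} {f : Fin m → ℚ} (hf : f ∈ fixS σ) (i : ℤ) :
    ∀ x, f ((σ ^ i) x) = f x := by
  induction i using Int.induction_on with
  | zero => simp
  | succ k ih =>
      intro x
      have h1 : (σ ^ ((k : ℤ) + 1)) x = (σ ^ (k : ℤ)) (σ x) := by
        rw [zpow_add_one, Equiv.Perm.mul_apply]
      rw [h1, ih (σ x), hf x]
  | pred k ih =>
      intro x
      have h1 : (σ ^ ((-k : ℤ) - 1)) x = (σ ^ (-k : ℤ)) (σ⁻¹ x) := by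
        rw [zpow_sub_one, Equiv.Perm.mul_apply]
      have h2 : f (σ⁻¹ x) = f x := by
        have := hf (σ⁻¹ x)
        rw [show σ (σ⁻¹ x) = x from σ.apply_symm_apply x] at this
        exact this.symm
      rw [h1, ih (σ⁻¹ x), h2]

private noncomputable def fixEquiv (σ : Equiv.Perm (Fin m)) :
    fixS σ ≃ₗ[ℚ] (Quotient (Equiv.Perm.SameCycle.setoid σ) → ℚ) where
  toFun f := Quotient.lift (f : Fin m → ℚ) (fun a b (h : σ.SameCycle a b) => by
    obtain ⟨i, hi⟩ := h
    rw [← hi]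
    exact (fix_zpow f.2 i a).symm)
  map_add' f g := by
    funext q
    induction q using Quotient.ind
    rfl
  map_smul' c f := by
    funext q
    induction q using Quotient.ind
    rfl
  invFun g := ⟨fun x => g ⟦x⟧, fun x => congrArg g (Quotient.sound (⟨-1, by simp⟩ :
    σ.SameCycle (σ x) x))⟩
  left_inv f := by ext x; rfl
  right_inv g := by
    funext q
    induction q using Quotient.ind
    rfl

private lemma finrank_fixS (σ : Equiv.Perm (Fin m)) :
    Module.finrank ℚ (fixS σ) = Nat.card (Quotient (Equiv.Perm.SameCycle.setoid σ)) := by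
  letI : Fintype (Quotient (Equiv.Perm.SameCycle.setoid σ)) := Fintype.ofFinite _
  rw [(fixEquiv σ).finrank_eq, Module.finrank_fintype_fun_eq_card, Nat.card_eq_fintype_card]

private def phi (σ : Equiv.Perm (Fin m)) (x : Fin m) :
    {c : Equiv.Perm (Fin m) // c ∈ σ.cycleFactorsFinset} ⊕ {x : Fin m // σ x = x} :=
  if h : σ x = x then Sum.inr ⟨x, h⟩
  else Sum.inl ⟨σ.cycleOf x, cycleOf_mem_cycleFactorsFinset_iff.2 (mem_support.2 h)⟩

private lemma phi_resp (σ : Equiv.Perm (Fin m)) {a b : Fin m} (h : σ.SameCycle a b) :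
    phi σ a = phi σ b := by
  by_cases ha : σ a = a
  · obtain ⟨i, hi⟩ := h
    rw [zpow_apply_eq_self_of_apply_eq_self ha i] at hi
    rw [hi]
  · have hb : σ b ≠ b := by
      intro hb
      obtain ⟨i, hi⟩ := h.symm
      rw [zpow_apply_eq_self_of_apply_eq_self hb i] at hi
      exact ha (hi ▸ hb)
    simp only [phi, dif_neg ha, dif_neg hb]
    exact congrArg Sum.inl (Subtype.ext (h.cycleOf_eq))

private noncomputable def quotEquiv (σ : Equiv.Perm (Fin m)) :
    Quotient (Equiv.Perm.SameCycle.setoid σ) ≃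
      ({c : Equiv.Perm (Fin m) // c ∈ σ.cycleFactorsFinset} ⊕ {x : Fin m // σ x = x}) := by
  apply Equiv.ofBijective (Quotient.lift (phi σ) (fun a b h => phi_resp σ h))
  constructor
  · rintro ⟨a⟩ ⟨b⟩ h
    change phi σ a = phi σ b at h
    apply Quotient.sound
    by_cases ha : σ a = a <;> by_cases hb : σ b = b
    · simp only [phi, dif_pos ha, dif_pos hb, Sum.inr.injEq, Subtype.mk.injEq] at h
      exact h ▸ Equiv.Perm.SameCycle.refl σ a
    · simp [phi, dif_pos ha, dif_neg hb] at h
    · simp [phi, dif_neg ha, dif_pos hb] at h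
    · simp only [phi, dif_neg ha, dif_neg hb, Sum.inl.injEq, Subtype.mk.injEq] at h
      have hmem : b ∈ (σ.cycleOf b).support :=
        mem_support_cycleOf_iff.2 ⟨Equiv.Perm.SameCycle.refl σ b, mem_support.2 hb⟩
      rw [← h] at hmem
      exact (mem_support_cycleOf_iff.1 hmem).1
  · rintro (⟨c, hc⟩ | ⟨x, hx⟩)
    · have hcyc := mem_cycleFactorsFinset_iff.1 hc
      obtain ⟨x, hxs⟩ := hcyc.1.nonempty_support
      have hx' : σ x ≠ x := by
        rw [← hcyc.2 x hxs]
        exact mem_support.1 hxs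
      refine ⟨⟦x⟧, ?_⟩
      change phi σ x = _
      simp only [phi, dif_neg hx']
      exact congrArg Sum.inl (Subtype.ext (cycle_is_cycleOf hxs hc).symm)
    · exact ⟨⟦x⟧, by change phi σ x = _; simp [phi, dif_pos hx]⟩

private lemma finrank_fixS_eq (σ : Equiv.Perm (Fin m)) :
    Module.finrank ℚ (fixS σ) = cycleCount σ := by
  rw [finrank_fixS, Nat.card_congr (quotEquiv σ), Nat.card_sum]
  unfold cycleCount fixedPointCount
  congr 1
  · rw [Nat.card_eq_fintype_card, Fintype.card_coe, Equiv.Perm.cycleType_def,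
      Multiset.card_map]
    rfl
  · rw [Nat.card_eq_fintype_card, Fintype.card_subtype]

private lemma fixS_inf_le (σ τ : Equiv.Perm (Fin m)) :
    fixS σ ⊓ fixS τ ≤ fixS (σ * τ) := by
  rintro f ⟨hσ, hτ⟩ x
  have : f (σ (τ x)) = f (τ x) := hσ (τ x)
  rw [Equiv.Perm.mul_apply, this, hτ x]

private theorem key_ineq (σ τ : Equiv.Perm (Fin m)) :
    cycleCount σ + cycleCount τ ≤ m + cycleCount (σ * τ) := by
  have h := Submodule.finrank_sup_add_finrank_inf_eq (fixS σ) (fixS τ)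
  have h1 : Module.finrank ℚ ↥(fixS σ ⊔ fixS τ) ≤ m := by
    have := Submodule.finrank_le (fixS σ ⊔ fixS τ)
    rwa [Module.finrank_fintype_fun_eq_card, Fintype.card_fin] at this
  have h2 : Module.finrank ℚ ↥(fixS σ ⊓ fixS τ) ≤ Module.finrank ℚ ↥(fixS (σ * τ)) :=
    Submodule.finrank_mono (fixS_inf_le σ τ)
  have e1 := finrank_fixS_eq σ
  have e2 := finrank_fixS_eq τ
  have e3 := finrank_fixS_eq (σ * τ)
  omega

private lemma cycleCount_conj (σ τ : Equiv.Perm (Fin m)) :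
    cycleCount (τ * σ * τ⁻¹) = cycleCount σ := by
  unfold cycleCount fixedPointCount
  rw [Equiv.Perm.cycleType_conj]
  congr 1
  apply Finset.card_equiv (τ⁻¹ : Equiv.Perm (Fin m))
  intro x
  simp only [Finset.mem_filter, Finset.mem_univ, true_and, Equiv.Perm.mul_apply, Finset.mem_filter_univ, Set.mem_setOf_eq]
  constructor
  · intro h
    have := congrArg (τ⁻¹ : Equiv.Perm (Fin m)) (Finset.mem_filter.1 h).2
    simpa using this
  · intro h
    have := congrArg τ h
    exact Finset.mem_filter.2 ⟨Finset.mem_univ _, by simpa using this⟩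

private lemma cycleCount_inv (σ : Equiv.Perm (Fin m)) : cycleCount σ⁻¹ = cycleCount σ := by
  unfold cycleCount fixedPointCount
  rw [Equiv.Perm.cycleType_inv]
  congr 2
  apply Finset.filter_congr
  intro x _
  constructor
  · intro h
    have := congrArg σ h
    simpa using this.symm
  · intro h
    have := congrArg (σ⁻¹ : Equiv.Perm (Fin m)) h
    simpa using this.symm

end TwoCAux

private lemma cycleCount_eq_pos (n : ℕ) (π : Equiv.Perm (Fin (n + 1))) (hπ : π 0 = 0) :
    cycleCount π = cycleCountPos n π + 1 := by
  unfold cycleCount cycleCountPos fixedPointCount fixedPointCountPos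
  have : (Finset.univ.filter fun x : Fin (n+1) => π x = x) =
      insert 0 (Finset.univ.filter fun x : Fin (n+1) => x ≠ 0 ∧ π x = x) := by
    ext x
    simp only [Finset.mem_filter, Finset.mem_univ, true_and, Finset.mem_insert]
    constructor
    · intro h
      by_cases hx : x = 0
      · exact Or.inl hx
      · exact Or.inr ⟨hx, h⟩
    · rintro (rfl | ⟨-, h⟩)
      · exact hπ
      · exact h
  rw [this, Finset.card_insert_of_notMem (by simp)]
  omega


/-- for every permutation π of {1,…,n} (extended to {0,…,n} by fixing 0),
2·c(π) ≤ n − 1 + c(overline(π)), where c(π) counts the cycles of π as a permutation of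
{1,…,n} and c(overline(π)) those of overline(π) on {0,1,…,n}. -/
theorem two_c_le (n : ℕ) (π : Equiv.Perm (Fin (n + 1))) (hπ : π 0 = 0) :
    (2 * cycleCountPos n π : ℤ) ≤ (n : ℤ) - 1 + cycleCount (ob n π) := by
  have hkey := key_ineq (rho n * π * (rho n)⁻¹) π⁻¹
  have hob : rho n * π * (rho n)⁻¹ * π⁻¹ = ob n π := by
    unfold ob
    group
  rw [hob, cycleCount_conj, cycleCount_inv, cycleCount_eq_pos n π hπ] at hkey
  have : (2 * (cycleCountPos n π + 1) : ℤ) ≤ (n + 1 : ℤ) + cycleCount (ob n π) := by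
    exact_mod_cast Nat.cast_le.mpr (by omega : 2 * (cycleCountPos n π + 1) ≤ (n+1) + cycleCount (ob n π))
  omega
end

section
/- Let π be a permutation of {1,2,…,n} (extended to {0,1,…,n} by fixing 0) and let C be a cycle of the permutation overline(π) of length ℓ ≥ 2. Say that a descent of π, i.e. an index i with 2 ≤ i ≤ n and π_i < π_{i−1}, is contained in C if the element π_i belongs to the cycle C. Then the number of descents of π contained in C is at least 1 and at most ℓ − 1. -/
open Fin.NatCast

lemma ob_apply (n : ℕ) (π : Equiv.Perm (Fin (n + 1))) (y : Fin (n + 1)) :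
    ob n π y = π (π.symm y - 1) + 1 := by
  have h2 : (rho n)⁻¹ (π⁻¹ y) = π.symm y - 1 := by
    rw [Equiv.Perm.inv_def, Equiv.symm_apply_eq]
    show π.symm y = finRotate (n+1) _
    rw [finRotate_succ_apply, sub_add_cancel]
  show (rho n) ((π) ((rho n)⁻¹ (π⁻¹ y))) = _
  rw [h2]
  show finRotate (n+1) _ = _
  rw [finRotate_succ_apply]

lemma cast_sub_one {n : ℕ} (j : Fin (n+1)) (h2 : 1 ≤ j.val) :
    ((j.val - 1 : ℕ) : Fin (n+1)) = j - 1 := by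
  rw [eq_sub_iff_add_eq]
  have : (((j.val - 1) + 1 : ℕ) : Fin (n+1)) = j := by
    rw [Nat.sub_add_cancel h2, Fin.cast_val_eq_self]
  rwa [Nat.cast_add, Nat.cast_one] at this

lemma add_one_eq_zero_iff {n : ℕ} (w : Fin (n+1)) : w + 1 = 0 ↔ w = Fin.last n := by
  constructor
  · intro h
    have := Fin.val_add_one w
    rw [h] at this
    by_contra hc
    simp [hc] at this
  · intro h
    have := Fin.val_add_one w
    rw [if_pos h] at this
    exact Fin.ext this

/-- let π be a permutation of {1,…,n} (extended to {0,…,n} by fixing 0) and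
let C be a cycle of overline(π) of length ℓ ≥ 2 — formalised as the orbit
C = {y | overline(π).SameCycle x y} of some element x, with |C| = ℓ. Then the number of
descents of π (indices i with 2 ≤ i ≤ n and π_i < π_{i−1}) whose element π_i belongs to C
is at least 1 and at most ℓ − 1. -/
theorem descents_in_cycle (n : ℕ) (π : Equiv.Perm (Fin (n + 1))) (hπ : π 0 = 0)
    (x : Fin (n + 1)) (ℓ : ℕ) (hℓ : 2 ≤ ℓ)
    (C : Finset (Fin (n + 1)))
    (hC : C = Finset.univ.filter fun y => (ob n π).SameCycle x y)
    (hcard : C.card = ℓ) :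
    1 ≤ ((Finset.Icc 2 n).filter fun i : ℕ =>
        π (i : Fin (n + 1)) < π ((i - 1 : ℕ) : Fin (n + 1)) ∧
          π (i : Fin (n + 1)) ∈ C).card ∧
      ((Finset.Icc 2 n).filter fun i : ℕ =>
        π (i : Fin (n + 1)) < π ((i - 1 : ℕ) : Fin (n + 1)) ∧
          π (i : Fin (n + 1)) ∈ C).card ≤ ℓ - 1 := by
  classical
  set f := ob n π with hf
  have hmem : ∀ y, y ∈ C ↔ f.SameCycle x y := by
    intro y; rw [hC]; simp
  have hCne : C.Nonempty := by
    rw [← Finset.card_pos, hcard]; omega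
  have hn : 1 ≤ n := by
    have h := Finset.card_le_univ C
    have h2 : Fintype.card (Fin (n+1)) = n + 1 := Fintype.card_fin _
    rw [h2] at h
    omega
  have hstep : ∀ y ∈ C, f y ∈ C := fun y hy =>
    (hmem _).2 (((hmem _).1 hy).apply_right)
  have hstep' : ∀ y ∈ C, f⁻¹ y ∈ C := fun y hy =>
    (hmem _).2 (((hmem _).1 hy).symm_apply_right)
  have hnofix : ∀ y ∈ C, f y ≠ y := by
    intro y hy hfix
    have hsub : C ⊆ {y} := by
      intro z hz
      obtain ⟨k, hk⟩ := ((hmem y).1 hy).symm.trans ((hmem z).1 hz)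
      have := Equiv.Perm.zpow_apply_eq_self_of_apply_eq_self hfix k
      rw [hk] at this
      simp [this]
    have := Finset.card_le_card hsub
    rw [hcard, Finset.card_singleton] at this
    omega
  have hsymm0 : π.symm 0 = 0 := by rw [Equiv.symm_apply_eq, hπ]
  -- key: for y ∈ C, if j := π.symm y has j.val ≥ 1, then f y = π (j-1) + 1
  -- descent helper: produce membership of j.val in the filter
  have hmem_filter : ∀ j : Fin (n+1), 2 ≤ j.val → π j < π (j - 1) → π j ∈ C →
      j.val ∈ (Finset.Icc 2 n).filter fun i : ℕ =>
        π (i : Fin (n + 1)) < π ((i - 1 : ℕ) : Fin (n + 1)) ∧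
          π (i : Fin (n + 1)) ∈ C := by
    intro j h2 hdesc hC'
    rw [Finset.mem_filter, Finset.mem_Icc]
    have hjlt := j.isLt
    have hc1 : ((j.val : ℕ) : Fin (n+1)) = j := Fin.cast_val_eq_self j
    have hc2 : ((j.val - 1 : ℕ) : Fin (n+1)) = j - 1 := cast_sub_one j (by omega)
    rw [hc1, hc2]
    exact ⟨⟨h2, by omega⟩, hdesc, hC'⟩
  -- lower bound
  have hlow : ∃ j : Fin (n+1), 2 ≤ j.val ∧ π j < π (j - 1) ∧ π j ∈ C := by
    by_cases h0 : (0 : Fin (n+1)) ∈ C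
    · -- predecessor of 0
      set y := f⁻¹ 0 with hy
      have hyC : y ∈ C := hstep' 0 h0
      have hfy : f y = 0 := f.apply_symm_apply 0
      have hy0 : y ≠ 0 := by
        intro h; exact hnofix y hyC (by rw [hfy, h])
      set j := π.symm y with hj
      have hπj : π j = y := π.apply_symm_apply y
      have hj0 : j ≠ 0 := by
        intro h; rw [h, hπ] at hπj; exact hy0 hπj.symm
      have hjv1 : 1 ≤ j.val := by
        rcases Nat.eq_zero_or_pos j.val with h | h
        · exact absurd (Fin.ext h) hj0
        · exact h
      have hob := ob_apply n π y
      rw [hfy, ← hj] at hob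
      have hlast : π (j - 1) = Fin.last n := by
        rw [← add_one_eq_zero_iff]; exact hob.symm
      have hjv2 : 2 ≤ j.val := by
        rcases Nat.lt_or_ge j.val 2 with h | h
        · -- j.val = 1, so j - 1 = 0
          have hjeq : j.val = 1 := by omega
          have : j - 1 = 0 := by
            rw [← cast_sub_one j hjv1, hjeq]; simp
          rw [this, hπ] at hlast
          have := congrArg Fin.val hlast
          simp [Fin.val_last] at this
          omega
        · exact h
      refine ⟨j, hjv2, ?_, by rw [hπj]; exact hyC⟩
      rw [hπj, hlast]
      have hne : y ≠ Fin.last n := by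
        intro h
        have : j = j - 1 := π.injective (by rw [hπj, hlast, h])
        have hv := congrArg Fin.val this
        rw [← cast_sub_one j hjv1, Fin.val_cast_of_lt (by omega)] at hv
        omega
      rw [Fin.lt_def, Fin.val_last]
      have := y.isLt
      have hvne : y.val ≠ n := fun h => hne (Fin.ext (by rw [h, Fin.val_last]))
      omega
    · -- minimum element
      set m := C.min' hCne with hm
      have hmC : m ∈ C := C.min'_mem hCne
      have hm0 : m ≠ 0 := fun h => h0 (h ▸ hmC)
      set j := π.symm m with hj
      have hπj : π j = m := π.apply_symm_apply m
      have hj0 : j ≠ 0 := by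
        intro h; rw [h, hπ] at hπj; exact hm0 hπj.symm
      have hjv1 : 1 ≤ j.val := by
        rcases Nat.eq_zero_or_pos j.val with h | h
        · exact absurd (Fin.ext h) hj0
        · exact h
      have hob := ob_apply n π m
      rw [← hj] at hob
      set w := π (j - 1) with hw
      have hwlast : w ≠ Fin.last n := by
        intro h
        have : f m = 0 := by rw [hob, (add_one_eq_zero_iff w).2 h]
        exact h0 (this ▸ hstep m hmC)
      have hval : (w + 1).val = w.val + 1 := by
        rw [Fin.val_add_one, if_neg hwlast]
      have hfmC : f m ∈ C := hstep m hmC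
      have hfmne : f m ≠ m := hnofix m hmC
      have hle : m ≤ f m := C.min'_le _ hfmC
      have hlt : m.val < (f m).val := by
        rw [Fin.le_def] at hle
        have : m.val ≠ (f m).val := fun h => hfmne (Fin.ext h.symm)
        omega
      rw [hob, hval] at hlt
      have hjv2 : 2 ≤ j.val := by
        rcases Nat.lt_or_ge j.val 2 with h | h
        · have hjeq : j.val = 1 := by omega
          have hj1 : j - 1 = 0 := by
            rw [← cast_sub_one j hjv1, hjeq]; simp
          rw [hw, hj1, hπ, Fin.val_zero] at hlt
          exact ((hm0 (Fin.ext (show m.val = (0:Fin (n+1)).val by simp only [Fin.val_zero]; omega))).elim)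
        · exact h
      refine ⟨j, hjv2, ?_, by rw [hπj]; exact hmC⟩
      rw [hπj, ← hw, Fin.lt_def]
      have hne : m ≠ w := by
        intro h
        have : j = j - 1 := π.injective (by rw [hπj, ← hw, h])
        have hv := congrArg Fin.val this
        rw [← cast_sub_one j hjv1, Fin.val_cast_of_lt (by omega)] at hv
        omega
      have : m.val ≠ w.val := fun h => hne (Fin.ext h)
      omega
  -- upper bound witness
  have hwit : ∃ z ∈ C, ∀ i ∈ (Finset.Icc 2 n).filter fun i : ℕ =>
        π (i : Fin (n + 1)) < π ((i - 1 : ℕ) : Fin (n + 1)) ∧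
          π (i : Fin (n + 1)) ∈ C, π (i : Fin (n+1)) ≠ z := by
    by_cases h0 : (0 : Fin (n+1)) ∈ C
    · refine ⟨0, h0, ?_⟩
      intro i hi hzero
      rw [Finset.mem_filter, Finset.mem_Icc] at hi
      have : ((i : ℕ) : Fin (n+1)) = 0 := by
        rw [← hπ] at hzero; exact π.injective hzero
      have := congrArg Fin.val this
      rw [Fin.val_cast_of_lt (by omega)] at this
      simp at this
      omega
    · set M := C.max' hCne with hM
      refine ⟨M, C.max'_mem hCne, ?_⟩
      intro i hi hMeq
      rw [Finset.mem_filter, Finset.mem_Icc] at hi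
      obtain ⟨⟨hi2, hin⟩, hdesc, hiC⟩ := hi
      set j : Fin (n+1) := ((i : ℕ) : Fin (n+1)) with hjdef
      have hjv : j.val = i := Fin.val_cast_of_lt (by omega)
      have hc2 : ((i - 1 : ℕ) : Fin (n+1)) = j - 1 := by
        rw [← cast_sub_one j (by omega), hjv]
      rw [hc2] at hdesc
      -- f M = π (j - 1) + 1
      have hsymM : π.symm M = j := by rw [← hMeq]; exact π.symm_apply_apply j
      have hob := ob_apply n π M
      rw [hsymM] at hob
      set w := π (j - 1) with hw
      have hwlast : w ≠ Fin.last n := by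
        intro h
        have : f M = 0 := by rw [hob, (add_one_eq_zero_iff w).2 h]
        exact h0 (this ▸ hstep M (C.max'_mem hCne))
      have hval : (w + 1).val = w.val + 1 := by
        rw [Fin.val_add_one, if_neg hwlast]
      have hfMC : f M ∈ C := hstep M (C.max'_mem hCne)
      have hle : f M ≤ M := C.le_max' _ hfMC
      rw [Fin.le_def, hob, hval] at hle
      rw [hMeq, Fin.lt_def] at hdesc
      omega
  obtain ⟨j, hj2, hjdesc, hjC⟩ := hlow
  obtain ⟨z, hzC, hz⟩ := hwit
  constructor
  · exact Finset.card_pos.2 ⟨j.val, hmem_filter j hj2 hjdesc hjC⟩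
  · set D := (Finset.Icc 2 n).filter fun i : ℕ =>
        π (i : Fin (n + 1)) < π ((i - 1 : ℕ) : Fin (n + 1)) ∧
          π (i : Fin (n + 1)) ∈ C with hD
    have himg : (D.image fun i : ℕ => π (i : Fin (n+1))) ⊆ C.erase z := by
      intro y hy
      rw [Finset.mem_image] at hy
      obtain ⟨i, hi, rfl⟩ := hy
      rw [Finset.mem_erase]
      exact ⟨hz i hi, (Finset.mem_filter.1 hi).2.2⟩
    have hinj : Set.InjOn (fun i : ℕ => π (i : Fin (n+1))) D := by
      intro a ha b hb hab
      rw [Finset.mem_coe, hD, Finset.mem_filter, Finset.mem_Icc] at ha hb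
      have h := congrArg Fin.val (π.injective hab)
      rw [Fin.val_cast_of_lt (show a < n+1 by omega),
        Fin.val_cast_of_lt (show b < n+1 by omega)] at h
      exact h
    have h1 : (D.image fun i : ℕ => π (i : Fin (n+1))).card = D.card :=
      Finset.card_image_of_injOn hinj
    have h2 := Finset.card_le_card himg
    rw [Finset.card_erase_of_mem hzC, hcard, h1] at h2
    omega
end

section
/- Let π be a 2-permutation of {1,2,…,n}, i.e. a permutation such that every cycle of the permutation overline(π) of {0,1,…,n} has length exactly 2. Then the number of descents of π, i.e. the number of indices i with 2 ≤ i ≤ n and π_i < π_{i−1}, equals (n+1)/2. -/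
open Fin.NatCast

lemma ob_apply_eq (n : ℕ) (π : Equiv.Perm (Fin (n + 1))) (x : Fin (n + 1)) :
    ob n π x = π (π⁻¹ x - 1) + 1 := by
  have hinv : ∀ y : Fin (n+1), (rho n)⁻¹ y = y - 1 := by
    intro y
    rw [Equiv.Perm.inv_eq_iff_eq]
    show y = finRotate (n+1) (y - 1)
    rw [finRotate_succ_apply, sub_add_cancel]
  show rho n (π ((rho n)⁻¹ (π⁻¹ x))) = _
  rw [hinv]
  show finRotate (n+1) _ = _
  rw [finRotate_succ_apply]

/-- if π is a 2-permutation of {1,…,n} (extended to {0,…,n} by fixing 0),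
i.e. every cycle of overline(π) has length exactly 2 (overline(π) is a fixed-point-free
involution), then the number of descents of π (indices i with 2 ≤ i ≤ n and
π_i < π_{i−1}) equals (n+1)/2. -/
theorem descents_of_two_permutation (n : ℕ) (π : Equiv.Perm (Fin (n + 1)))
    (hπ : π 0 = 0)
    (hfpf : ∀ x : Fin (n + 1), ob n π x ≠ x)
    (hinv : ∀ x : Fin (n + 1), ob n π (ob n π x) = x) :
    ((((Finset.Icc 2 n).filter fun i : ℕ =>
        π (i : Fin (n + 1)) < π ((i - 1 : ℕ) : Fin (n + 1))).card : ℚ)) =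
      ((n : ℚ) + 1) / 2 := by
  classical
  rcases Nat.eq_zero_or_pos n with rfl | hn
  · exact absurd (Fin.eq_zero _) (hfpf 0)
  set f : Fin (n+1) → Fin (n+1) := fun x => ob n π x with hfdef
  have hfa : ∀ x, f x = π (π⁻¹ x - 1) + 1 := fun x => ob_apply_eq n π x
  have hne : ∀ x, f x ≠ x := hfpf
  have hff : ∀ x, f (f x) = x := hinv
  have hfinj : Function.Injective f := Function.LeftInverse.injective hff
  have hπ0 : π⁻¹ (0 : Fin (n+1)) = 0 := by
    rw [Equiv.Perm.inv_eq_iff_eq]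
    exact hπ.symm
  have hlast1 : (Fin.last n : Fin (n+1)) + 1 = 0 := Fin.last_add_one n
  have hzs : (0:Fin (n+1)) - 1 = Fin.last n := by
    rw [sub_eq_iff_eq_add, hlast1]
  have hf0 : f 0 = π (Fin.last n) + 1 := by rw [hfa, hπ0, hzs]
  have hπlast : π (Fin.last n) ≠ Fin.last n := by
    intro h
    exact hne 0 (by rw [hf0, h, hlast1])
  have hlast0 : (Fin.last n : Fin (n+1)) ≠ 0 := by
    intro h
    have := congrArg Fin.val h
    simp [Fin.val_last] at this
    omega
  have h1v : (1 : Fin (n+1)).val = 1 := by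
    rw [Fin.val_one']
    exact Nat.mod_eq_of_lt (by omega)
  have h1ne : (1 : Fin (n+1)) ≠ 0 := by
    intro h; rw [h] at h1v; simp at h1v
  set S : Finset (Fin (n+1)) := Finset.univ.filter (fun v => v < f v) with hS
  have hmemS : ∀ v, v ∈ S ↔ v < f v := by intro v; simp [hS]
  have hcard2 : S.card + S.card = n + 1 := by
    have h1 : (Finset.univ.filter (fun v : Fin (n+1) => ¬ v < f v)).card = S.card := by
      apply Finset.card_bij (fun v _ => f v)
      · intro v hv
        simp only [Finset.mem_filter, Finset.mem_univ, true_and] at hv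
        rw [hmemS, hff]
        exact lt_of_le_of_ne (le_of_not_gt hv) (hne v)
      · intro a _ b _ h; exact hfinj h
      · intro w hw
        rw [hmemS] at hw
        refine ⟨f w, ?_, hff w⟩
        simp only [Finset.mem_filter, Finset.mem_univ, true_and, hff]
        exact not_lt.mpr (le_of_lt hw)
    have h2 := Finset.card_filter_add_card_filter_not
      (s := (Finset.univ : Finset (Fin (n+1)))) (fun v : Fin (n+1) => v < f v)
    rw [h1] at h2
    simpa using h2
  have hvne0 : ∀ a : Fin (n+1), a.val = 0 ↔ a = 0 := by
    intro a; rw [Fin.ext_iff]; simp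
  have hcast : ∀ i : ℕ, 2 ≤ i → i ≤ n →
      ((i : Fin (n+1)).val = i ∧ (((i-1:ℕ)) : Fin (n+1)).val = i - 1 ∧
       ((i : Fin (n+1)) - 1 = ((i-1:ℕ) : Fin (n+1)))) := by
    intro i h2 hle
    refine ⟨Fin.val_cast_of_lt (by omega), Fin.val_cast_of_lt (by omega), ?_⟩
    rw [sub_eq_iff_eq_add]
    have h : (((i-1:ℕ)) : Fin (n+1)) + 1 = (((i-1)+1 : ℕ) : Fin (n+1)) := by push_cast; ring
    rw [h, Nat.sub_add_cancel (by omega)]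
  have hfπ : ∀ i : ℕ, 2 ≤ i → i ≤ n →
      f (π (i : Fin (n+1))) = π (((i-1:ℕ)) : Fin (n+1)) + 1 := by
    intro i h2 hle
    rw [hfa, show π⁻¹ (π (i : Fin (n+1))) = i from Equiv.symm_apply_apply π _, (hcast i h2 hle).2.2]
  have hcardD : ((Finset.Icc 2 n).filter fun i : ℕ =>
      π (i : Fin (n + 1)) < π ((i - 1 : ℕ) : Fin (n + 1))).card = S.card := by
    apply Finset.card_bij (fun i _ =>
      if π (((i-1:ℕ)) : Fin (n+1)) = Fin.last n then 0 else π ((i:ℕ) : Fin (n+1)))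
    · intro i hi
      simp only [Finset.mem_filter, Finset.mem_Icc] at hi
      obtain ⟨⟨h2, hle⟩, hdes⟩ := hi
      by_cases hw : π (((i-1:ℕ)) : Fin (n+1)) = Fin.last n
      · rw [if_pos hw, hmemS]
        exact Fin.pos_of_ne_zero (hne 0)
      · rw [if_neg hw, hmemS, Fin.lt_def, hfπ i h2 hle, Fin.val_add_one, if_neg hw]
        rw [Fin.lt_def] at hdes
        omega
    · intro a ha b hb hab
      simp only [Finset.mem_filter, Finset.mem_Icc] at ha hb
      obtain ⟨⟨ha2, han⟩, hda⟩ := ha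
      obtain ⟨⟨hb2, hbn⟩, hdb⟩ := hb
      by_cases hwa : π (((a-1:ℕ)) : Fin (n+1)) = Fin.last n <;>
        by_cases hwb : π (((b-1:ℕ)) : Fin (n+1)) = Fin.last n
      · have h := π.injective (hwa.trans hwb.symm)
        have h' := congrArg Fin.val h
        rw [(hcast a ha2 han).2.1, (hcast b hb2 hbn).2.1] at h'
        omega
      · rw [if_pos hwa, if_neg hwb] at hab
        exfalso
        rw [← hπ] at hab
        have h := congrArg Fin.val (π.injective hab)
        rw [(hcast b hb2 hbn).1] at h
        simp at h
        omega
      · rw [if_neg hwa, if_pos hwb] at hab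
        exfalso
        rw [← hπ] at hab
        have h := congrArg Fin.val (π.injective hab.symm)
        rw [(hcast a ha2 han).1] at h
        simp at h
        omega
      · rw [if_neg hwa, if_neg hwb] at hab
        have h := congrArg Fin.val (π.injective hab)
        rw [(hcast a ha2 han).1, (hcast b hb2 hbn).1] at h
        omega
    · intro v hv
      rw [hmemS] at hv
      by_cases hv0 : v = 0
      · subst hv0
        set u := π⁻¹ (Fin.last n) with hu
        have hπu : π u = Fin.last n := Equiv.apply_symm_apply π _
        have hu0 : u ≠ 0 := by
          intro h; rw [h, hπ] at hπu; exact hlast0 hπu.symm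
        have hun : u ≠ Fin.last n := by
          intro h; rw [h] at hπu; exact hπlast hπu
        have huv1 : 1 ≤ u.val := by
          rcases Nat.eq_zero_or_pos u.val with h | h
          · exact absurd ((hvne0 u).mp h) hu0
          · exact h
        have huvn : u.val < n := by
          have h := Fin.is_le u
          rcases lt_or_eq_of_le h with h' | h'
          · exact h'
          · exact absurd (Fin.ext (by rw [h', Fin.val_last])) hun
        refine ⟨u.val + 1, ?_, ?_⟩
        · simp only [Finset.mem_filter, Finset.mem_Icc]
          have hyc : ((u.val + 1 - 1 : ℕ) : Fin (n+1)) = u := by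
            simp [Fin.cast_val_eq_self]
          have hxc : ((u.val + 1 : ℕ) : Fin (n+1)) = u + 1 := by
            push_cast [Fin.cast_val_eq_self]; ring
          refine ⟨⟨by omega, by omega⟩, ?_⟩
          rw [hyc, hxc, hπu]
          have hne' : π (u + 1) ≠ Fin.last n := by
            intro h
            have := π.injective (h.trans hπu.symm)
            rw [add_eq_left] at this
            exact h1ne this
          rw [Fin.lt_def, Fin.val_last]
          have h := Fin.is_le (π (u+1))
          rcases lt_or_eq_of_le h with h' | h'
          · exact h'
          · exact absurd (Fin.ext (by rw [h', Fin.val_last])) hne'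
        · have hyc : ((u.val + 1 - 1 : ℕ) : Fin (n+1)) = u := by
            simp [Fin.cast_val_eq_self]
          rw [hyc, if_pos hπu]
      · set u := π⁻¹ v with hu
        have hπu : π u = v := Equiv.apply_symm_apply π _
        have hu0 : u ≠ 0 := by
          intro h; rw [h, hπ] at hπu; exact hv0 hπu.symm
        have hfv : f v = π (u - 1) + 1 := by rw [hfa]
        have hwne : π (u - 1) ≠ Fin.last n := by
          intro h
          rw [h, hlast1] at hfv
          rw [hfv] at hv
          exact absurd hv (not_lt.mpr (Fin.zero_le v))
        have husub : (u - 1).val = u.val - 1 := by rw [Fin.coe_sub_one, if_neg hu0]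
        have hu1 : u.val ≠ 1 := by
          intro h
          have hu' : u = 1 := Fin.ext (by rw [h, h1v])
          have hz : u - 1 = 0 := by rw [hu']; exact sub_self 1
          rw [hz, hπ, zero_add] at hfv
          rw [hfv, Fin.lt_def, h1v] at hv
          exact hv0 ((hvne0 v).mp (by omega))
        have h2 : 2 ≤ u.val := by
          have : u.val ≠ 0 := fun h => hu0 ((hvne0 u).mp h)
          omega
        have hlen : u.val ≤ n := Fin.is_le u
        have hxc : ((u.val : ℕ) : Fin (n+1)) = u := Fin.cast_val_eq_self u
        have hyc : ((u.val - 1 : ℕ) : Fin (n+1)) = u - 1 :=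
          Fin.ext (by rw [Fin.val_cast_of_lt (by omega), husub])
        refine ⟨u.val, ?_, ?_⟩
        · simp only [Finset.mem_filter, Finset.mem_Icc]
          refine ⟨⟨h2, hlen⟩, ?_⟩
          rw [hxc, hyc, hπu]
          have hle' : v.val ≤ (π (u-1)).val := by
            rw [hfv, Fin.lt_def, Fin.val_add_one, if_neg hwne] at hv
            omega
          have hne' : v ≠ π (u - 1) := by
            intro h
            have := π.injective (hπu.trans h)
            rw [eq_comm, sub_eq_self] at this
            exact h1ne this
          rw [Fin.lt_def]
          exact lt_of_le_of_ne hle' (fun h => hne' (Fin.ext h))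
        · rw [hyc, if_neg hwne, hxc, hπu]
  rw [hcardD]
  have h : (S.card : ℚ) + S.card = (n : ℚ) + 1 := by exact_mod_cast hcard2
  linarith
end
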